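/- Let ε > 0. For every y ∈ ℝ, the convolution of the Laplace density with itself satisfies ∫_ℝ (ε/2)·exp(−ε·|y + z|) · (ε/2)·exp(−ε·|z|) dz = (ε/4)·exp(−ε·|y|)·(1 + ε·|y|). (That is, the difference of two i.i.d. Laplace(0, 1/ε) random variables has density y ↦ (ε/4)·exp(−ε·|y|)·(1 + ε·|y|).) -/

import Mathlib

open MeasureTheory Real Set

lemma aux_integrableOn_Ioi (c a : ℝ) (hc : 0 < c) :
    IntegrableOn (fun z : ℝ => Real.exp (-(c * z))) (Ioi a) := by
  simpa [neg_mul] using exp_neg_integrableOn_Ioi a hc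

lemma aux_integral_Ioi (c a : ℝ) (hc : 0 < c) :
    ∫ z in Ioi a, Real.exp (-(c * z)) = Real.exp (-(c * a)) / c := by
  have h := integral_comp_mul_left_Ioi (fun x => Real.exp (-x)) a hc
  simp only [smul_eq_mul] at h
  rw [h, integral_exp_neg_Ioi]
  rw [div_eq_inv_mul]

lemma aux_integrableOn_Iic (c a : ℝ) (hc : 0 < c) :
    IntegrableOn (fun z : ℝ => Real.exp (c * z)) (Iic a) := by
  have h := (MeasurePreserving.integrableOn_comp_preimage
      (Measure.measurePreserving_neg (volume : Measure ℝ))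
      (Homeomorph.neg ℝ).isClosedEmbedding.measurableEmbedding
      (f := fun z : ℝ => Real.exp (-(c * z))) (s := Ioi (-a))).mpr
      (aux_integrableOn_Ioi c (-a) hc)
  have hpre : (fun x : ℝ => -x) ⁻¹' (Ioi (-a)) = Iio a := by
    ext x; simp
  rw [hpre] at h
  have h' : IntegrableOn (fun z : ℝ => Real.exp (c * z)) (Iio a) := by
    apply h.congr_fun ?_ measurableSet_Iio
    intro x _
    simp [Function.comp, mul_neg]
  rwa [← integrableOn_Iic_iff_integrableOn_Iio] at h'

lemma aux_integral_Iic (c a : ℝ) (hc : 0 < c) :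
    ∫ z in Iic a, Real.exp (c * z) = Real.exp (c * a) / c := by
  have h := integral_comp_neg_Iic a (fun x : ℝ => Real.exp (-(c * x)))
  simp only [mul_neg, neg_neg] at h
  rw [h, aux_integral_Ioi c (-a) hc]
  simp [mul_neg]

lemma laplace_conv_key (ε : ℝ) (hε : 0 < ε) (y : ℝ) (hy : 0 ≤ y) :
    ∫ z : ℝ, (ε / 2 * Real.exp (-ε * |y + z|)) * (ε / 2 * Real.exp (-ε * |z|)) =
      ε / 4 * Real.exp (-ε * |y|) * (1 + ε * |y|) := by
  set f : ℝ → ℝ := fun z => (ε / 2 * Real.exp (-ε * |y + z|)) * (ε / 2 * Real.exp (-ε * |z|))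
    with hf
  have hcont : Continuous f := by fun_prop
  -- integrability of the dominating function
  have hg1 : IntegrableOn (fun z : ℝ => Real.exp (-ε * |z|)) (Iic 0) := by
    apply (aux_integrableOn_Iic ε 0 hε).congr_fun ?_ measurableSet_Iic
    intro x hx
    simp only
    rw [abs_of_nonpos (hx : x ≤ 0)]
    ring_nf
  have hg2 : IntegrableOn (fun z : ℝ => Real.exp (-ε * |z|)) (Ioi 0) := by
    apply (aux_integrableOn_Ioi ε 0 hε).congr_fun ?_ measurableSet_Ioi
    intro x hx
    simp only
    rw [abs_of_pos (hx : 0 < x)]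
    ring_nf
  have hg : Integrable (fun z : ℝ => ε / 2 * (ε / 2) * Real.exp (-ε * |z|)) := by
    apply Integrable.const_mul
    have := hg1.union hg2
    rwa [Set.Iic_union_Ioi, integrableOn_univ] at this
  have hint : Integrable f := by
    apply hg.mono hcont.aestronglyMeasurable
    filter_upwards with z
    simp only [hf]
    have h1 : Real.exp (-ε * |y + z|) ≤ 1 := by
      apply Real.exp_le_one_iff.mpr
      have : 0 ≤ |y + z| := abs_nonneg _
      nlinarith
    have h2 : (0:ℝ) < Real.exp (-ε * |z|) := Real.exp_pos _
    have h3 : (0:ℝ) < Real.exp (-ε * |y + z|) := Real.exp_pos _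
    have h0 : (0:ℝ) ≤ ε / 2 * Real.exp (-ε * |y + z|) * (ε / 2 * Real.exp (-ε * |z|)) :=
      (mul_pos (mul_pos (half_pos hε) h3) (mul_pos (half_pos hε) h2)).le
    have h0' : (0:ℝ) ≤ ε / 2 * (ε / 2) * Real.exp (-ε * |z|) :=
      (mul_pos (mul_pos (half_pos hε) (half_pos hε)) h2).le
    rw [Real.norm_eq_abs, Real.norm_eq_abs, abs_of_nonneg h0, abs_of_nonneg h0']
    nlinarith [mul_nonneg (mul_nonneg (mul_pos (half_pos hε) (half_pos hε)).le h2.le)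
      (sub_nonneg.mpr h1)]
  -- split the integral
  have hsplit : ∫ z : ℝ, f z =
      (∫ z in Iic (-y), f z) + ((∫ z in Ioc (-y) 0, f z) + ∫ z in Ioi (0:ℝ), f z) := by
    rw [← intervalIntegral.integral_Iic_add_Ioi (b := -y) hint.integrableOn hint.integrableOn]
    congr 1
    rw [← setIntegral_union (Set.Ioc_disjoint_Ioi le_rfl) measurableSet_Ioi
      hint.integrableOn hint.integrableOn,
      Set.Ioc_union_Ioi_eq_Ioi (by linarith : -y ≤ (0:ℝ))]
  have e1 : ∫ z in Iic (-y), f z = ε / 8 * Real.exp (-ε * y) := by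
    have hcongr : ∀ z ∈ Iic (-y), f z =
        ε / 2 * (ε / 2) * Real.exp (ε * y) * Real.exp (2 * ε * z) := by
      intro z hz
      have hz' : z ≤ -y := hz
      have h1 : y + z ≤ 0 := by linarith
      have h2 : z ≤ 0 := by linarith
      simp only [hf]
      rw [abs_of_nonpos h1, abs_of_nonpos h2,
        show -ε * -(y + z) = ε * y + ε * z from by ring,
        show -ε * -z = ε * z from by ring, Real.exp_add,
        show 2 * ε * z = ε * z + ε * z from by ring, Real.exp_add]
      ring
    rw [setIntegral_congr_fun measurableSet_Iic hcongr, integral_const_mul _ _,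
      aux_integral_Iic (2 * ε) (-y) (by linarith)]
    have hexp : Real.exp (ε * y) * Real.exp (2 * ε * -y) = Real.exp (-ε * y) := by
      rw [← Real.exp_add]; ring_nf
    rw [← hexp]
    field_simp
    ring
  have e2 : ∫ z in Ioc (-y) 0, f z = ε / 2 * (ε / 2) * Real.exp (-ε * y) * y := by
    have hcongr : ∀ z ∈ Ioc (-y) (0:ℝ), f z = ε / 2 * (ε / 2) * Real.exp (-ε * y) := by
      intro z hz
      have h1 : (0:ℝ) ≤ y + z := by
        have := hz.1
        linarith
      have h2 : z ≤ 0 := hz.2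
      simp only [hf]
      rw [abs_of_nonneg h1, abs_of_nonpos h2,
        show -ε * (y + z) = -ε * y + -(ε * z) from by ring,
        show -ε * -z = ε * z from by ring, Real.exp_add, Real.exp_neg]
      field_simp
    rw [setIntegral_congr_fun measurableSet_Ioc hcongr, setIntegral_const, smul_eq_mul,
      Real.volume_real_Ioc_of_le (by linarith : -y ≤ (0:ℝ))]
    ring
  have e3 : ∫ z in Ioi (0:ℝ), f z = ε / 8 * Real.exp (-ε * y) := by
    have hcongr : ∀ z ∈ Ioi (0:ℝ), f z =
        ε / 2 * (ε / 2) * Real.exp (-ε * y) * Real.exp (-(2 * ε * z)) := by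
      intro z hz
      have h1 : (0:ℝ) ≤ y + z := by
        have : (0:ℝ) < z := hz
        linarith
      have h2 : (0:ℝ) ≤ z := le_of_lt hz
      simp only [hf]
      rw [abs_of_nonneg h1, abs_of_nonneg h2,
        show -ε * (y + z) = -ε * y + -(ε * z) from by ring,
        show -ε * z = -(ε * z) from by ring, Real.exp_add,
        show -(2 * ε * z) = -(ε * z) + -(ε * z) from by ring, Real.exp_add]
      ring
    rw [setIntegral_congr_fun measurableSet_Ioi hcongr, integral_const_mul _ _,
      aux_integral_Ioi (2 * ε) 0 (by linarith)]
    simp only [mul_zero, neg_zero, Real.exp_zero]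
    field_simp
    ring
  rw [hsplit, e1, e2, e3, abs_of_nonneg hy]
  ring

/-- The convolution of the Laplace(0, 1/ε) density with itself: the difference of two
i.i.d. Laplace(0, 1/ε) random variables has density `y ↦ (ε/4)·exp(−ε·|y|)·(1 + ε·|y|)`. -/
theorem laplace_self_convolution (ε : ℝ) (hε : 0 < ε) (y : ℝ) :
    ∫ z : ℝ, (ε / 2 * Real.exp (-ε * |y + z|)) * (ε / 2 * Real.exp (-ε * |z|)) =
      ε / 4 * Real.exp (-ε * |y|) * (1 + ε * |y|) := by
  rcases le_or_gt 0 y with hy | hy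
  · exact laplace_conv_key ε hε y hy
  · have key := laplace_conv_key ε hε (-y) (by linarith)
    have h1 : (fun z : ℝ => (ε / 2 * Real.exp (-ε * |y + z|)) * (ε / 2 * Real.exp (-ε * |z|)))
        = fun z : ℝ => (ε / 2 * Real.exp (-ε * |-y + -z|)) * (ε / 2 * Real.exp (-ε * |-z|)) := by
      funext z
      rw [show -y + -z = -(y + z) by ring, abs_neg, abs_neg]
    rw [h1, integral_neg_eq_self
      (fun z : ℝ => (ε / 2 * Real.exp (-ε * |-y + z|)) * (ε / 2 * Real.exp (-ε * |z|))), key,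
      ← abs_neg y]
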